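/- Let J be an unbounded subinterval of ℝ and g : J → ℝ a locally absolutely continuous function on J with derivative g′. Assume g′ ∈ L^α(J) for some α > 1, that g′ is of locally bounded variation on J, and that there exist a constant V_J > 0 and r ∈ (0,1] such that the total variation of g′ on the interval with endpoints a and b is at most V_J·|b − a|^r for all a, b ∈ J. Then g′ ∈ L^∞(J) and ‖g′‖_{J,∞} ≤ ((αr+1)/(α^{αr/(αr+1)}·r^{αr/(αr+1)}))·‖g′‖_{J,α}^{αr/(αr+1)}·V_J^{1/(αr+1)}. -/

import Mathlib

open MeasureTheory Set
open scoped ENNReal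


lemma opt_aux (α r V N M : ℝ) (hα : 1 < α) (hr : 0 < r) (hV : 0 < V) (hN : 0 ≤ N)
    (h : ∀ δ : ℝ, 0 < δ → M ≤ N * δ ^ (-(1/α)) + V * δ ^ r) :
    M ≤ (α * r + 1) / (α ^ (α * r / (α * r + 1)) * r ^ (α * r / (α * r + 1))) *
          N ^ (α * r / (α * r + 1)) * V ^ (1 / (α * r + 1)) := by
  have hα0 : (0:ℝ) < α := by linarith
  have hA : (0:ℝ) < α * r := by positivity
  have hk : (0:ℝ) < α * r + 1 := by linarith
  have hk0 : (α * r + 1) ≠ 0 := ne_of_gt hk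
  rcases eq_or_lt_of_le hN with hN0 | hNpos
  · -- N = 0
    have hRHS : (α * r + 1) / (α ^ (α * r / (α * r + 1)) * r ^ (α * r / (α * r + 1))) *
          N ^ (α * r / (α * r + 1)) * V ^ (1 / (α * r + 1)) = 0 := by
      rw [← hN0, Real.zero_rpow (by positivity)]
      ring
    rw [hRHS]
    by_contra hM
    push_neg at hM
    have hδ : (0:ℝ) < (M / (2 * V)) ^ (1/r) := by positivity
    have hle := h _ hδ
    have h2 : ((M / (2 * V)) ^ (1/r)) ^ r = M / (2 * V) := by
      rw [← Real.rpow_mul (by positivity), one_div_mul_cancel (ne_of_gt hr), Real.rpow_one]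
    rw [← hN0, zero_mul, zero_add, h2] at hle
    have hMV : V * (M / (2 * V)) = M / 2 := by field_simp
    rw [hMV] at hle
    linarith
  · -- N > 0
    set L1 := Real.log N with hL1
    set L2 := Real.log (α * r) with hL2
    set L3 := Real.log V with hL3
    set k := α * r + 1 with hkdef
    set E := (α*r/k) * L1 + (1/k) * L3 - (α*r/k) * L2 with hE
    set D := (α / k) * (L1 - L2 - L3) with hD
    have hδpos : (0:ℝ) < Real.exp D := Real.exp_pos D
    have hkey := h _ hδpos
    have e1 : Real.exp D ^ (-(1/α)) = Real.exp (-(1/k) * (L1 - L2 - L3)) := by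
      rw [Real.rpow_def_of_pos hδpos, Real.log_exp]
      congr 1
      rw [hD]
      field_simp
    have e2 : Real.exp D ^ r = Real.exp ((α*r/k) * (L1 - L2 - L3)) := by
      rw [Real.rpow_def_of_pos hδpos, Real.log_exp]
      congr 1
      rw [hD]
      ring
    have hNe : N = Real.exp L1 := (Real.exp_log hNpos).symm
    have hVe : V = Real.exp L3 := (Real.exp_log hV).symm
    have t1 : N * Real.exp (-(1/k) * (L1 - L2 - L3)) = Real.exp (L2 + E) := by
      nth_rewrite 1 [hNe]
      rw [← Real.exp_add]
      congr 1
      rw [hE, hkdef]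
      field_simp
      ring
    have t2 : V * Real.exp ((α*r/k) * (L1 - L2 - L3)) = Real.exp E := by
      nth_rewrite 1 [hVe]
      rw [← Real.exp_add]
      congr 1
      rw [hE, hkdef]
      field_simp
      ring
    have t3 : (α * r + 1) / (α ^ (α * r / (α * r + 1)) * r ^ (α * r / (α * r + 1))) *
          N ^ (α * r / (α * r + 1)) * V ^ (1 / (α * r + 1)) = k * Real.exp E := by
      rw [Real.rpow_def_of_pos hα0, Real.rpow_def_of_pos hr, Real.rpow_def_of_pos hNpos,
        Real.rpow_def_of_pos hV, ← Real.exp_add, div_eq_mul_inv, ← Real.exp_neg,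
        mul_assoc, mul_assoc, ← Real.exp_add, ← Real.exp_add, ← hkdef, ← hL1, ← hL3]
      congr 1
      rw [hE, hL2, Real.log_mul (ne_of_gt hα0) (ne_of_gt hr)]
      ring
    rw [t3]
    calc M ≤ N * Real.exp D ^ (-(1/α)) + V * Real.exp D ^ r := hkey
      _ = Real.exp (L2 + E) + Real.exp E := by rw [e1, e2, t1, t2]
      _ = k * Real.exp E := by
          rw [Real.exp_add, Real.exp_log hA, hkdef]; ring


lemma interval_est (J : Set ℝ) (g' : ℝ → ℝ) (α V r : ℝ) (hα : 1 < α) (hV : 0 < V)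
    (hr : 0 < r)
    (hg'α : MemLp g' (ENNReal.ofReal α) (volume.restrict J))
    (hptw : ∀ x ∈ J, ∀ t ∈ J, |g' x - g' t| ≤ V * |t - x| ^ r)
    (x a b : ℝ) (hab : Icc a b ⊆ J) (hx : x ∈ Icc a b) (δ : ℝ) (hδ : 0 < δ)
    (hba : b - a = δ) :
    |g' x| ≤ (eLpNorm g' (ENNReal.ofReal α) (volume.restrict J)).toReal * δ ^ (-(1/α))
      + V * δ ^ r := by
  have hα0 : (0:ℝ) < α := by linarith
  set E := eLpNorm g' (ENNReal.ofReal α) (volume.restrict J) with hEdef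
  set N := E.toReal with hNdef
  have hN0 : 0 ≤ N := ENNReal.toReal_nonneg
  have hterm : 0 ≤ N * δ ^ (-(1/α)) := by positivity
  by_cases hM : |g' x| - V * δ ^ r ≤ 0
  · linarith
  push_neg at hM
  -- pointwise lower bound on the interval
  have hlow : ∀ t ∈ Icc a b, |g' x| - V * δ ^ r ≤ |g' t| := by
    intro t ht
    have h1 := hptw x (hab hx) t (hab ht)
    have h2 : |t - x| ≤ δ := by
      rw [abs_le]
      constructor <;> [skip; skip] <;>
        · obtain ⟨hx1, hx2⟩ := hx; obtain ⟨ht1, ht2⟩ := ht; linarith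
    have h3 : V * |t - x| ^ r ≤ V * δ ^ r :=
      mul_le_mul_of_nonneg_left (Real.rpow_le_rpow (abs_nonneg _) h2 hr.le) hV.le
    have h4 : |g' x| - |g' t| ≤ |g' x - g' t| := abs_sub_abs_le_abs_sub _ _
    linarith
  -- integrate
  have key : ENNReal.ofReal (|g' x| - V * δ ^ r) * ENNReal.ofReal δ
      ≤ eLpNorm g' 1 (volume.restrict (Icc a b)) := by
    rw [eLpNorm_one_eq_lintegral_enorm]
    calc ENNReal.ofReal (|g' x| - V * δ ^ r) * ENNReal.ofReal δ
        = ∫⁻ _ in Icc a b, ENNReal.ofReal (|g' x| - V * δ ^ r) ∂volume := by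
          rw [setLIntegral_const, Real.volume_Icc, hba]
      _ ≤ ∫⁻ t in Icc a b, ↑‖g' t‖₊ ∂volume := by
          refine lintegral_mono_ae (ae_restrict_of_forall_mem measurableSet_Icc ?_)
          intro t ht
          change _ ≤ ‖g' t‖ₑ
          rw [← ofReal_norm, Real.norm_eq_abs]
          exact ENNReal.ofReal_le_ofReal (hlow t ht)
  have hmeas : AEStronglyMeasurable g' (volume.restrict (Icc a b)) :=
    hg'α.aestronglyMeasurable.mono_measure (Measure.restrict_mono hab le_rfl)
  have hone : (1 : ℝ≥0∞) ≤ ENNReal.ofReal α := by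
    rw [ENNReal.one_le_ofReal]; linarith
  have hle2 := eLpNorm_le_eLpNorm_mul_rpow_measure_univ hone hmeas
  rw [Measure.restrict_apply_univ, Real.volume_Icc, hba, ENNReal.toReal_one,
    ENNReal.toReal_ofReal hα0.le] at hle2
  have hle3 : eLpNorm g' (ENNReal.ofReal α) (volume.restrict (Icc a b)) ≤ E :=
    eLpNorm_mono_measure _ (Measure.restrict_mono hab le_rfl)
  have hchain : ENNReal.ofReal (|g' x| - V * δ ^ r) * ENNReal.ofReal δ
      ≤ E * ENNReal.ofReal δ ^ (1/1 - 1/α) := by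
    refine le_trans key (le_trans hle2 ?_)
    exact mul_le_mul_left hle3 _
  have hYne : E * ENNReal.ofReal δ ^ (1/1 - 1/α) ≠ ⊤ := by
    apply ENNReal.mul_ne_top hg'α.2.ne
    exact ENNReal.rpow_ne_top_of_nonneg (by
      rw [sub_nonneg, div_le_div_iff₀ hα0 one_pos]
      linarith) ENNReal.ofReal_ne_top
  have hreal := ENNReal.toReal_mono hYne hchain
  rw [ENNReal.toReal_mul, ENNReal.toReal_mul, ENNReal.toReal_ofReal (by linarith : 0 ≤ |g' x| - V * δ ^ r),
    ENNReal.toReal_ofReal hδ.le, ← ENNReal.toReal_rpow, ENNReal.toReal_ofReal hδ.le, ← hNdef] at hreal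
  -- (|g' x| - V δ^r) * δ ≤ N * δ^(1 - 1/α)
  have hpow : δ ^ (1/1 - 1/α) = δ ^ (-(1/α)) * δ := by
    rw [show (1/1 - 1/α : ℝ) = -(1/α) + 1 by ring, Real.rpow_add hδ, Real.rpow_one]
  rw [hpow] at hreal
  have : |g' x| - V * δ ^ r ≤ N * δ ^ (-(1/α)) := by
    have := le_of_mul_le_mul_right (by linarith [hreal] : (|g' x| - V * δ ^ r) * δ ≤ (N * δ ^ (-(1/α))) * δ) hδ
    exact this
  linarith

/-- **Theorem 5.** Let `J` be an unbounded interval of `ℝ` and `g : J → ℝ` locally absolutely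
continuous with derivative `g'`. If `g' ∈ L^α(J)` for some `α > 1`, `g'` is of locally bounded
variation and its variation on any subinterval with endpoints `a, b ∈ J` is `≤ V |b-a|^r` with
`V > 0`, `r ∈ (0,1]`, then `g' ∈ L^∞(J)` and
`‖g'‖_{J,∞} ≤ ((αr+1)/(α^{αr/(αr+1)} r^{αr/(αr+1)})) ‖g'‖_{J,α}^{αr/(αr+1)} V^{1/(αr+1)}`. -/
theorem landau_sup_norm_of_variation_bound_Lalpha
    (J : Set ℝ) (hJ : J.OrdConnected) (hJu : ¬ Bornology.IsBounded J)
    (g g' : ℝ → ℝ) (α : ℝ) (hα : 1 < α)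
    (hderiv : ∀ x ∈ J, HasDerivWithinAt g (g' x) J x)
    (hg'α : MemLp g' (ENNReal.ofReal α) (volume.restrict J))
    (hbv : ∀ a ∈ J, ∀ b ∈ J, BoundedVariationOn g' (uIcc a b))
    (V r : ℝ) (hV : 0 < V) (hr : r ∈ Ioc (0 : ℝ) 1)
    (hvar : ∀ a ∈ J, ∀ b ∈ J,
      eVariationOn g' (uIcc a b) ≤ ENNReal.ofReal (V * |b - a| ^ r)) :
    MemLp g' ⊤ (volume.restrict J) ∧
      (eLpNorm g' ⊤ (volume.restrict J)).toReal ≤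
        (α * r + 1) / (α ^ (α * r / (α * r + 1)) * r ^ (α * r / (α * r + 1))) *
          (eLpNorm g' (ENNReal.ofReal α) (volume.restrict J)).toReal ^ (α * r / (α * r + 1)) *
            V ^ (1 / (α * r + 1)) := by
  obtain ⟨hr0, hr1⟩ := hr
  set N := (eLpNorm g' (ENNReal.ofReal α) (volume.restrict J)).toReal with hNdef
  set C := (α * r + 1) / (α ^ (α * r / (α * r + 1)) * r ^ (α * r / (α * r + 1))) *
      N ^ (α * r / (α * r + 1)) * V ^ (1 / (α * r + 1)) with hCdef
  have hα0 : (0:ℝ) < α := by linarith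
  have hN0 : 0 ≤ N := ENNReal.toReal_nonneg
  have hC0 : 0 ≤ C := by positivity
  -- pointwise Hölder-type bound from the variation hypothesis
  have hptw : ∀ x ∈ J, ∀ t ∈ J, |g' x - g' t| ≤ V * |t - x| ^ r := by
    intro x hx t ht
    have h1 := hvar x hx t ht
    have h2 : edist (g' x) (g' t) ≤ eVariationOn g' (uIcc x t) :=
      eVariationOn.edist_le g' left_mem_uIcc right_mem_uIcc
    have h3 : ENNReal.ofReal |g' x - g' t| ≤ ENNReal.ofReal (V * |t - x| ^ r) := by
      rw [← Real.dist_eq, ← edist_dist]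
      exact le_trans h2 h1
    exact (ENNReal.ofReal_le_ofReal_iff (by positivity)).mp h3
  -- pointwise sup bound
  have hpoint : ∀ x ∈ J, |g' x| ≤ C := by
    intro x hx
    refine opt_aux α r V N _ hα hr0 hV hN0 ?_
    intro δ hδ
    rw [isBounded_iff_bddBelow_bddAbove, not_and_or] at hJu
    rcases hJu with hb | hb
    · -- unbounded below : use [x - δ, x]
      obtain ⟨y, hy, hxy⟩ := not_bddBelow_iff.mp hb (x - δ)
      have hsub : Icc (x - δ) x ⊆ J := fun t ht => hJ.out hy hx ⟨by linarith [ht.1], ht.2⟩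
      exact interval_est J g' α V r hα hV hr0 hg'α hptw x (x - δ) x hsub
        ⟨by linarith, le_refl x⟩ δ hδ (by ring)
    · -- unbounded above : use [x, x + δ]
      obtain ⟨y, hy, hxy⟩ := not_bddAbove_iff.mp hb (x + δ)
      have hsub : Icc x (x + δ) ⊆ J := fun t ht => hJ.out hx hy ⟨ht.1, by linarith [ht.2]⟩
      exact interval_est J g' α V r hα hV hr0 hg'α hptw x x (x + δ) hsub
        ⟨le_refl x, by linarith⟩ δ hδ (by ring)
  have hae : ∀ᵐ t ∂(volume.restrict J), ‖g' t‖ ≤ C :=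
    ae_restrict_of_forall_mem hJ.measurableSet
      (fun t ht => by rw [Real.norm_eq_abs]; exact hpoint t ht)
  have hess := eLpNormEssSup_le_of_ae_bound hae
  constructor
  · exact ⟨hg'α.aestronglyMeasurable, by
      rw [eLpNorm_exponent_top]
      exact lt_of_le_of_lt hess ENNReal.ofReal_lt_top⟩
  · rw [eLpNorm_exponent_top]
    exact ENNReal.toReal_le_of_le_ofReal hC0 hess
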